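/- arXiv:2510.13022 — 3 statements merged into one kernel-verified Lean document; each statement's English description precedes it below -/
import Mathlib

section
/- Let Y be a measurable space, μ a probability measure on Y × Y, and r₁, r₂ : Y → ℝ bounded measurable functions with sup_{y ∈ Y} |r₁(y) − r₂(y)| ≤ Δ for some Δ ≥ 0. Define p_k(y, y') = σ(r_k(y) − r_k(y')) for k = 1, 2, where σ is the sigmoid function. Then |Var_μ(p₁) − Var_μ(p₂)| ≤ 2Δ. -/
open MeasureTheory

/-- The sigmoid function `σ(z) = 1 / (1 + exp (-z))`. -/
noncomputable def sigmoid (z : ℝ) : ℝ := 1 / (1 + Real.exp (-z))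

/-- Variance of a real-valued function: `∫ U² dμ - (∫ U dμ)²`. -/
noncomputable def Var {Ω : Type*} [MeasurableSpace Ω] (μ : Measure Ω) (U : Ω → ℝ) : ℝ :=
  (∫ ω, (U ω) ^ 2 ∂μ) - (∫ ω, U ω ∂μ) ^ 2

lemma one_add_exp_pos (z : ℝ) : 0 < 1 + Real.exp (-z) := by positivity

lemma sigmoid_pos (z : ℝ) : 0 < sigmoid z := by
  unfold sigmoid; positivity

lemma sigmoid_lt_one (z : ℝ) : sigmoid z < 1 := by
  unfold sigmoid
  rw [div_lt_one (one_add_exp_pos z)]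
  linarith [Real.exp_pos (-z)]

lemma sigmoid_hasDerivAt (z : ℝ) :
    HasDerivAt sigmoid (Real.exp (-z) / (1 + Real.exp (-z)) ^ 2) z := by
  have h1 : HasDerivAt (fun z : ℝ => 1 + Real.exp (-z)) (-Real.exp (-z)) z := by
    simpa using (((Real.hasDerivAt_exp (-z)).comp z (hasDerivAt_neg z)).const_add 1)
  have h2 := h1.inv (ne_of_gt (one_add_exp_pos z))
  have : (fun z : ℝ => 1 + Real.exp (-z))⁻¹ = sigmoid := by
    funext w; simp [sigmoid, one_div]
  rw [this] at h2
  rw [neg_neg] at h2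
  exact h2

lemma sigmoid_deriv_bound (z : ℝ) :
    |Real.exp (-z) / (1 + Real.exp (-z)) ^ 2| ≤ 1 / 4 := by
  have he := (Real.exp_pos (-z)).le
  rw [abs_of_nonneg (by positivity)]
  rw [div_le_div_iff₀ (by positivity) (by norm_num)]
  nlinarith [sq_nonneg (1 - Real.exp (-z))]

lemma sigmoid_lip (a b : ℝ) : |sigmoid a - sigmoid b| ≤ |a - b| / 4 := by
  have := Convex.norm_image_sub_le_of_norm_hasDerivWithin_le
    (f := sigmoid) (f' := fun z => Real.exp (-z) / (1 + Real.exp (-z)) ^ 2)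
    (s := Set.univ) (C := 1 / 4)
    (fun x _ => (sigmoid_hasDerivAt x).hasDerivWithinAt)
    (fun x _ => by rw [Real.norm_eq_abs]; exact sigmoid_deriv_bound x)
    convex_univ (Set.mem_univ b) (Set.mem_univ a)
  simpa [Real.norm_eq_abs, div_eq_inv_mul, mul_comm] using this

lemma sigmoid_continuous : Continuous sigmoid :=
  continuous_const.div (by continuity) (fun z => (one_add_exp_pos z).ne')

theorem pvar_diff_le_two_delta {Y : Type*} [MeasurableSpace Y]
    (μ : Measure (Y × Y)) [IsProbabilityMeasure μ]
    (r₁ r₂ : Y → ℝ) (hr₁ : Measurable r₁) (hr₂ : Measurable r₂)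
    (hb₁ : ∃ B₁, ∀ y, |r₁ y| ≤ B₁) (hb₂ : ∃ B₂, ∀ y, |r₂ y| ≤ B₂)
    (Δ : ℝ) (hΔ : 0 ≤ Δ) (hdiff : ∀ y, |r₁ y - r₂ y| ≤ Δ) :
    |Var μ (fun yy => sigmoid (r₁ yy.1 - r₁ yy.2)) -
      Var μ (fun yy => sigmoid (r₂ yy.1 - r₂ yy.2))| ≤ 2 * Δ := by
  set p₁ : Y × Y → ℝ := fun yy => sigmoid (r₁ yy.1 - r₁ yy.2) with hp₁
  set p₂ : Y × Y → ℝ := fun yy => sigmoid (r₂ yy.1 - r₂ yy.2) with hp₂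
  have hm₁ : Measurable p₁ :=
    sigmoid_continuous.measurable.comp ((hr₁.comp measurable_fst).sub (hr₁.comp measurable_snd))
  have hm₂ : Measurable p₂ :=
    sigmoid_continuous.measurable.comp ((hr₂.comp measurable_fst).sub (hr₂.comp measurable_snd))
  have h01₁ : ∀ yy, 0 < p₁ yy ∧ p₁ yy < 1 := fun yy => ⟨sigmoid_pos _, sigmoid_lt_one _⟩
  have h01₂ : ∀ yy, 0 < p₂ yy ∧ p₂ yy < 1 := fun yy => ⟨sigmoid_pos _, sigmoid_lt_one _⟩
  -- pointwise closeness
  have hclose : ∀ yy : Y × Y, |p₁ yy - p₂ yy| ≤ Δ / 2 := by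
    intro yy
    have h := sigmoid_lip (r₁ yy.1 - r₁ yy.2) (r₂ yy.1 - r₂ yy.2)
    have h2 : |(r₁ yy.1 - r₁ yy.2) - (r₂ yy.1 - r₂ yy.2)| ≤ 2 * Δ := by
      have := hdiff yy.1
      have := hdiff yy.2
      have e : (r₁ yy.1 - r₁ yy.2) - (r₂ yy.1 - r₂ yy.2)
          = (r₁ yy.1 - r₂ yy.1) - (r₁ yy.2 - r₂ yy.2) := by ring
      rw [e]
      calc |(r₁ yy.1 - r₂ yy.1) - (r₁ yy.2 - r₂ yy.2)|
          ≤ |r₁ yy.1 - r₂ yy.1| + |r₁ yy.2 - r₂ yy.2| := abs_sub _ _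
        _ ≤ 2 * Δ := by linarith [hdiff yy.1, hdiff yy.2]
    calc |p₁ yy - p₂ yy| ≤ |(r₁ yy.1 - r₁ yy.2) - (r₂ yy.1 - r₂ yy.2)| / 4 := h
      _ ≤ 2 * Δ / 4 := by linarith
      _ = Δ / 2 := by ring
  -- integrability
  have hi₁ : Integrable p₁ μ := by
    refine (integrable_const (1 : ℝ)).mono' hm₁.aestronglyMeasurable ?_
    filter_upwards with yy
    rw [Real.norm_eq_abs, abs_of_pos (h01₁ yy).1]
    exact (h01₁ yy).2.le
  have hi₂ : Integrable p₂ μ := by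
    refine (integrable_const (1 : ℝ)).mono' hm₂.aestronglyMeasurable ?_
    filter_upwards with yy
    rw [Real.norm_eq_abs, abs_of_pos (h01₂ yy).1]
    exact (h01₂ yy).2.le
  have hi₁sq : Integrable (fun yy => (p₁ yy) ^ 2) μ := by
    refine (integrable_const (1 : ℝ)).mono' (hm₁.pow_const 2).aestronglyMeasurable ?_
    filter_upwards with yy
    rw [Real.norm_eq_abs, abs_of_nonneg (by positivity)]
    nlinarith [(h01₁ yy).1, (h01₁ yy).2]
  have hi₂sq : Integrable (fun yy => (p₂ yy) ^ 2) μ := by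
    refine (integrable_const (1 : ℝ)).mono' (hm₂.pow_const 2).aestronglyMeasurable ?_
    filter_upwards with yy
    rw [Real.norm_eq_abs, abs_of_nonneg (by positivity)]
    nlinarith [(h01₂ yy).1, (h01₂ yy).2]
  -- bound on difference of means
  have hmean : |(∫ yy, p₁ yy ∂μ) - ∫ yy, p₂ yy ∂μ| ≤ Δ / 2 := by
    rw [← integral_sub hi₁ hi₂]
    calc |∫ yy, (p₁ yy - p₂ yy) ∂μ| ≤ (Δ / 2) * (μ Set.univ).toReal := by
          rw [← Real.norm_eq_abs]
          apply norm_integral_le_of_norm_le_const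
          filter_upwards with yy
          simpa [Real.norm_eq_abs] using hclose yy
      _ = Δ / 2 := by simp
  -- bound on difference of second moments
  have hsq : |(∫ yy, (p₁ yy) ^ 2 ∂μ) - ∫ yy, (p₂ yy) ^ 2 ∂μ| ≤ Δ := by
    rw [← integral_sub hi₁sq hi₂sq]
    calc |∫ yy, ((p₁ yy) ^ 2 - (p₂ yy) ^ 2) ∂μ| ≤ Δ * (μ Set.univ).toReal := by
          rw [← Real.norm_eq_abs]
          apply norm_integral_le_of_norm_le_const
          filter_upwards with yy
          rw [Real.norm_eq_abs]
          have e : (p₁ yy) ^ 2 - (p₂ yy) ^ 2 = (p₁ yy - p₂ yy) * (p₁ yy + p₂ yy) := by ring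
          rw [e, abs_mul]
          have h1 := hclose yy
          have h2 : |p₁ yy + p₂ yy| ≤ 2 := by
            rw [abs_of_pos (by linarith [(h01₁ yy).1, (h01₂ yy).1])]
            linarith [(h01₁ yy).2, (h01₂ yy).2]
          calc |p₁ yy - p₂ yy| * |p₁ yy + p₂ yy| ≤ (Δ / 2) * 2 :=
                mul_le_mul h1 h2 (abs_nonneg _) (by linarith)
            _ = Δ := by ring
      _ = Δ := by simp
  -- means lie in [0,1]
  have hm_le : ∀ (p : Y × Y → ℝ), (∀ yy, 0 < p yy ∧ p yy < 1) → Integrable p μ →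
      0 ≤ ∫ yy, p yy ∂μ ∧ ∫ yy, p yy ∂μ ≤ 1 := by
    intro p h hp
    constructor
    · exact integral_nonneg fun yy => (h yy).1.le
    · calc ∫ yy, p yy ∂μ ≤ ∫ _, (1 : ℝ) ∂μ :=
            integral_mono hp (integrable_const 1) fun yy => (h yy).2.le
        _ = 1 := by simp
  obtain ⟨ha₁, ha₁'⟩ := hm_le p₁ h01₁ hi₁
  obtain ⟨ha₂, ha₂'⟩ := hm_le p₂ h01₂ hi₂
  have hmeansq : |(∫ yy, p₁ yy ∂μ) ^ 2 - (∫ yy, p₂ yy ∂μ) ^ 2| ≤ Δ := by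
    set A := ∫ yy, p₁ yy ∂μ
    set B := ∫ yy, p₂ yy ∂μ
    have e : A ^ 2 - B ^ 2 = (A - B) * (A + B) := by ring
    rw [e, abs_mul]
    have h2 : |A + B| ≤ 2 := by rw [abs_of_nonneg (by linarith)]; linarith
    calc |A - B| * |A + B| ≤ (Δ / 2) * 2 :=
          mul_le_mul hmean h2 (abs_nonneg _) (by linarith)
      _ = Δ := by ring
  unfold Var
  calc |((∫ yy, (p₁ yy) ^ 2 ∂μ) - (∫ yy, p₁ yy ∂μ) ^ 2) -
        ((∫ yy, (p₂ yy) ^ 2 ∂μ) - (∫ yy, p₂ yy ∂μ) ^ 2)|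
      ≤ |(∫ yy, (p₁ yy) ^ 2 ∂μ) - ∫ yy, (p₂ yy) ^ 2 ∂μ| +
        |(∫ yy, p₁ yy ∂μ) ^ 2 - (∫ yy, p₂ yy ∂μ) ^ 2| := by
        have e : ((∫ yy, (p₁ yy) ^ 2 ∂μ) - (∫ yy, p₁ yy ∂μ) ^ 2) -
            ((∫ yy, (p₂ yy) ^ 2 ∂μ) - (∫ yy, p₂ yy ∂μ) ^ 2)
            = ((∫ yy, (p₁ yy) ^ 2 ∂μ) - ∫ yy, (p₂ yy) ^ 2 ∂μ) -
              ((∫ yy, p₁ yy ∂μ) ^ 2 - (∫ yy, p₂ yy ∂μ) ^ 2) := by ring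
        rw [e]
        exact (abs_sub _ _)
    _ ≤ Δ + Δ := add_le_add hsq hmeansq
    _ = 2 * Δ := by ring
end

section
/- Let π be a probability measure on a measurable space Y, let E be a real Banach space, and let g : Y → E be a measurable function with ‖g(y)‖ ≤ G for all y and some G ≥ 0. Let p : Y × Y → ℝ be a measurable function with values in [0, 1] satisfying p(y, y') + p(y', y) = 1 for all y, y', and let V = Var_{π⊗π}(p). Then for every c > 0: ‖∫ (p(y, y') − 1/2)·(g(y) − g(y')) d(π ⊗ π)(y, y')‖ ≤ 2Gc + G·V/c². -/
open MeasureTheory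

theorem chebyshev_split_bound {Y : Type*} [MeasurableSpace Y]
    {E : Type*} [NormedAddCommGroup E] [NormedSpace ℝ E] [CompleteSpace E]
    (π : Measure Y) [IsProbabilityMeasure π]
    (g : Y → E) (hgm : StronglyMeasurable g) (G : ℝ) (hG : 0 ≤ G)
    (hgb : ∀ y, ‖g y‖ ≤ G)
    (p : Y × Y → ℝ) (hp : Measurable p) (hp01 : ∀ yy, 0 ≤ p yy ∧ p yy ≤ 1)
    (hsym : ∀ y y' : Y, p (y, y') + p (y', y) = 1) :
    ∀ c : ℝ, 0 < c →
      ‖∫ yy : Y × Y, (p yy - 1 / 2) • (g yy.1 - g yy.2) ∂(π.prod π)‖ ≤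
        2 * G * c + G * Var (π.prod π) p / c ^ 2 := by
  intro c hc
  set μ := π.prod π with hμdef
  have hprob : IsProbabilityMeasure μ := by infer_instance
  -- integrability of p
  have hpint : Integrable p μ := by
    refine (integrable_const (1 : ℝ)).mono' hp.aestronglyMeasurable ?_
    filter_upwards with yy
    rw [Real.norm_eq_abs, abs_le]
    exact ⟨by linarith [(hp01 yy).1], (hp01 yy).2⟩
  have hpsqint : Integrable (fun yy => (p yy) ^ 2) μ := by
    refine (integrable_const (1 : ℝ)).mono' (hp.pow_const 2).aestronglyMeasurable ?_
    filter_upwards with yy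
    rw [Real.norm_eq_abs, abs_le]
    constructor
    · nlinarith [(hp01 yy).1]
    · nlinarith [(hp01 yy).1, (hp01 yy).2]
  have hswapint : Integrable (fun yy : Y × Y => p (yy.2, yy.1)) μ := by
    refine (integrable_const (1 : ℝ)).mono'
      (hp.comp measurable_swap).aestronglyMeasurable ?_
    filter_upwards with yy
    rw [Real.norm_eq_abs, abs_le]
    exact ⟨by linarith [(hp01 (yy.2, yy.1)).1], (hp01 (yy.2, yy.1)).2⟩
  -- mean of p is 1/2
  have hswap : ∫ yy : Y × Y, p (yy.2, yy.1) ∂μ = ∫ yy, p yy ∂μ := by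
    have : ∫ yy : Y × Y, p (Prod.swap yy) ∂μ = ∫ yy, p yy ∂(μ.map Prod.swap) :=
      (integral_map measurable_swap.aemeasurable hp.aestronglyMeasurable).symm
    simp [hμdef, Measure.prod_swap] at this
    exact this
  have hpmean : ∫ yy, p yy ∂μ = 1 / 2 := by
    have h1 : ∫ yy : Y × Y, (p yy + p (yy.2, yy.1)) ∂μ = 1 := by
      have : ∀ yy : Y × Y, p yy + p (yy.2, yy.1) = 1 := by
        intro yy
        have := hsym yy.1 yy.2
        simpa using this
      simp [this]
    rw [integral_add hpint hswapint, hswap] at h1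
    linarith
  -- integrability of (p - 1/2)^2
  have hdsqint : Integrable (fun yy => (p yy - 1 / 2) ^ 2) μ := by
    refine (integrable_const (1 : ℝ)).mono'
      ((hp.sub_const _).pow_const 2).aestronglyMeasurable ?_
    filter_upwards with yy
    rw [Real.norm_eq_abs, abs_le]
    constructor
    · nlinarith [sq_nonneg (p yy - 1 / 2)]
    · nlinarith [(hp01 yy).1, (hp01 yy).2]
  -- second moment identity
  have hsubint : Integrable (fun yy => p yy ^ 2 - p yy) μ := hpsqint.sub hpint
  have hvar : ∫ yy, (p yy - 1 / 2) ^ 2 ∂μ = Var μ p := by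
    have hexp : ∀ yy : Y × Y, (p yy - 1 / 2) ^ 2 = p yy ^ 2 - p yy + 1 / 4 := by
      intro yy; ring
    rw [Var]
    simp_rw [hexp]
    rw [integral_add hsubint (integrable_const _), integral_sub hpsqint hpint,
      integral_const, hpmean]
    simp [measure_univ]
    ring
  -- pointwise bound
  have hbound : ∀ yy : Y × Y,
      ‖(p yy - 1 / 2) • (g yy.1 - g yy.2)‖ ≤ 2 * G * c + G * (p yy - 1 / 2) ^ 2 / c ^ 2 := by
    intro yy
    have h1 : ‖(p yy - 1 / 2) • (g yy.1 - g yy.2)‖ ≤ |p yy - 1 / 2| * (2 * G) := by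
      rw [norm_smul, Real.norm_eq_abs]
      have : ‖g yy.1 - g yy.2‖ ≤ 2 * G := by
        calc ‖g yy.1 - g yy.2‖ ≤ ‖g yy.1‖ + ‖g yy.2‖ := norm_sub_le _ _
        _ ≤ 2 * G := by linarith [hgb yy.1, hgb yy.2]
      exact mul_le_mul_of_nonneg_left this (abs_nonneg _)
    have habs : |p yy - 1 / 2| ≤ 1 / 2 := by
      rw [abs_le]; constructor <;> [linarith [(hp01 yy).1]; linarith [(hp01 yy).2]]
    have hsq : (p yy - 1 / 2) ^ 2 = |p yy - 1 / 2| ^ 2 := (sq_abs _).symm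
    rcases le_or_gt (|p yy - 1 / 2|) c with h | h
    · have h2 : |p yy - 1 / 2| * (2 * G) ≤ 2 * G * c :=
        by nlinarith [abs_nonneg (p yy - 1 / 2)]
      have hpos : 0 ≤ G * (p yy - 1 / 2) ^ 2 / c ^ 2 := by positivity
      linarith
    · have hgt : c ^ 2 < (p yy - 1 / 2) ^ 2 := by
        rw [hsq]; nlinarith [abs_nonneg (p yy - 1 / 2)]
      have h2 : |p yy - 1 / 2| * (2 * G) ≤ G := by nlinarith
      have h3 : G ≤ G * (p yy - 1 / 2) ^ 2 / c ^ 2 := by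
        rw [le_div_iff₀ (by positivity : (0:ℝ) < c ^ 2)]
        nlinarith
      have hpos : 0 ≤ 2 * G * c := by positivity
      linarith
  -- integrability of the majorant
  have hmaj2 : Integrable (fun yy => G * (p yy - 1 / 2) ^ 2 / c ^ 2) μ := by
    have h := hdsqint.const_mul (G / c ^ 2)
    exact h.congr (Filter.Eventually.of_forall fun yy => by ring)
  have hmajint : Integrable (fun yy => 2 * G * c + G * (p yy - 1 / 2) ^ 2 / c ^ 2) μ :=
    (integrable_const _).add hmaj2
  have hnorm := norm_integral_le_of_norm_le hmajint
    (Filter.Eventually.of_forall hbound)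
  calc ‖∫ yy : Y × Y, (p yy - 1 / 2) • (g yy.1 - g yy.2) ∂μ‖
      ≤ ∫ yy, (2 * G * c + G * (p yy - 1 / 2) ^ 2 / c ^ 2) ∂μ := hnorm
    _ = 2 * G * c + G * Var μ p / c ^ 2 := by
        rw [integral_add (integrable_const _) hmaj2, integral_const]
        simp_rw [mul_div_assoc]
        rw [integral_const_mul, integral_div, hvar]
        simp [measure_univ]
end

section
/- (Abstract form of Theorem 1: preference variance bounds the DPO gradient.) Let π be a probability measure on a measurable space Y, let E be a real Banach space, and let g : Y → E be a measurable function with ‖g(y)‖ ≤ G for all y and some G ≥ 0. Let p : Y × Y → ℝ be a measurable function with values in [0, 1] satisfying p(y, y') + p(y', y) = 1 for all y, y', and let V = Var_{π⊗π}(p). Then ‖∫ (1 − p(y, y'))·(g(y) − g(y')) d(π ⊗ π)(y, y')‖ ≤ 3·G·V^{1/3}. -/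
open MeasureTheory

/-- Abstract form of Theorem 1: preference variance bounds the DPO gradient. -/
theorem pvar_bounds_dpo_gradient {Y : Type*} [MeasurableSpace Y]
    {E : Type*} [NormedAddCommGroup E] [NormedSpace ℝ E] [CompleteSpace E]
    (π : Measure Y) [IsProbabilityMeasure π]
    (g : Y → E) (hgm : StronglyMeasurable g) (G : ℝ) (hG : 0 ≤ G)
    (hgb : ∀ y, ‖g y‖ ≤ G)
    (p : Y × Y → ℝ) (hp : Measurable p) (hp01 : ∀ yy, 0 ≤ p yy ∧ p yy ≤ 1)
    (hsym : ∀ y y' : Y, p (y, y') + p (y', y) = 1) :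
    ‖∫ yy : Y × Y, (1 - p yy) • (g yy.1 - g yy.2) ∂(π.prod π)‖ ≤
      3 * G * (Var (π.prod π) p) ^ ((1 : ℝ) / 3) := by
  set μ := π.prod π with hμdef
  set h : Y × Y → E := fun yy => g yy.1 - g yy.2 with hh
  set f : Y × Y → ℝ := fun yy => p yy - 1/2 with hf
  have hhm : StronglyMeasurable h :=
    (hgm.comp_measurable measurable_fst).sub (hgm.comp_measurable measurable_snd)
  have hhb : ∀ yy, ‖h yy‖ ≤ 2 * G := by
    intro yy
    calc ‖g yy.1 - g yy.2‖ ≤ ‖g yy.1‖ + ‖g yy.2‖ := norm_sub_le _ _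
      _ ≤ 2 * G := by have := hgb yy.1; have := hgb yy.2; linarith
  have hhi : Integrable h μ :=
    (integrable_const (2 * G)).mono' hhm.aestronglyMeasurable
      (Filter.Eventually.of_forall hhb)
  have hpb : ∀ yy, ‖p yy‖ ≤ 1 := fun yy => by
    rw [Real.norm_eq_abs, abs_le]; exact ⟨by linarith [(hp01 yy).1], (hp01 yy).2⟩
  have hpi : Integrable p μ :=
    (integrable_const (1 : ℝ)).mono' hp.aestronglyMeasurable
      (Filter.Eventually.of_forall hpb)
  have hp2i : Integrable (fun yy => (p yy) ^ 2) μ :=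
    (integrable_const (1 : ℝ)).mono' ((hp.pow_const 2).aestronglyMeasurable)
      (Filter.Eventually.of_forall fun yy => by
        rw [Real.norm_eq_abs, abs_pow]
        calc |p yy| ^ 2 ≤ 1 ^ 2 := pow_le_pow_left₀ (abs_nonneg _) (hpb yy) 2
          _ = 1 := one_pow 2)
  -- mean of p is 1/2
  have hpmean : ∫ yy, p yy ∂μ = 1 / 2 := by
    have hswap : ∫ yy : Y × Y, p yy.swap ∂μ = ∫ yy, p yy ∂μ := integral_prod_swap p
    have hpswapi : Integrable (fun yy : Y × Y => p yy.swap) μ :=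
      (integrable_const (1 : ℝ)).mono'
        ((hp.comp measurable_swap).aestronglyMeasurable)
        (Filter.Eventually.of_forall fun yy => hpb _)
    have h2 : ∫ yy : Y × Y, (p yy + p yy.swap) ∂μ = 1 := by
      have he : ∀ yy : Y × Y, p yy + p yy.swap = 1 := fun yy => hsym yy.1 yy.2
      simp only [he, integral_const, measure_univ, probReal_univ, smul_eq_mul, one_mul]
    rw [integral_add hpi hpswapi, hswap] at h2
    linarith
  -- integral of h is 0
  have hgfi : Integrable (fun yy : Y × Y => g yy.1) μ :=
    (integrable_const G).mono' (hgm.comp_measurable measurable_fst).aestronglyMeasurable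
      (Filter.Eventually.of_forall fun yy => hgb _)
  have hgsi : Integrable (fun yy : Y × Y => g yy.2) μ :=
    (integrable_const G).mono' (hgm.comp_measurable measurable_snd).aestronglyMeasurable
      (Filter.Eventually.of_forall fun yy => hgb _)
  have hgi : Integrable g π :=
    (integrable_const G).mono' hgm.aestronglyMeasurable
      (Filter.Eventually.of_forall hgb)
  have hfst : ∫ yy : Y × Y, g yy.1 ∂μ = ∫ y, g y ∂π := by
    rw [hμdef, integral_prod _ hgfi]
    simp [integral_const, measure_univ]
  have hsnd : ∫ yy : Y × Y, g yy.2 ∂μ = ∫ y, g y ∂π := by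
    rw [hμdef, integral_prod _ hgsi]
    simp [integral_const, measure_univ]
  have hint : ∫ yy, h yy ∂μ = 0 := by
    rw [hh]
    rw [integral_sub hgfi hgsi, hfst, hsnd, sub_self]
  -- variance as integral of f²
  have hf2i : Integrable (fun yy => (f yy) ^ 2) μ := by
    have : (fun yy => (f yy) ^ 2) = fun yy => (p yy) ^ 2 - p yy + 1/4 := by
      funext yy; simp only [hf]; ring
    rw [this]
    have hsubi : Integrable (fun yy => (p yy) ^ 2 - p yy) μ := hp2i.sub hpi
    exact hsubi.add (integrable_const _)
  have hVf : Var μ p = ∫ yy, (f yy) ^ 2 ∂μ := by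
    have he : ∫ yy, (f yy) ^ 2 ∂μ = ∫ yy, ((p yy) ^ 2 - p yy + 1/4) ∂μ := by
      apply integral_congr_ae
      exact Filter.Eventually.of_forall fun yy => by simp only [hf]; ring
    have he2 : ∫ yy, ((p yy) ^ 2 - p yy + 1/4) ∂μ =
        (∫ yy, (p yy) ^ 2 ∂μ) - (∫ yy, p yy ∂μ) + 1/4 := by
      have hsubi : Integrable (fun yy => (p yy) ^ 2 - p yy) μ := hp2i.sub hpi
      rw [integral_add hsubi (integrable_const _), integral_sub hp2i hpi,
        integral_const, probReal_univ]
      norm_num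
    rw [Var, hpmean, he, he2, hpmean]
    ring
  have hV0 : 0 ≤ Var μ p := by
    rw [hVf]; exact integral_nonneg fun yy => sq_nonneg _
  have hV1 : Var μ p ≤ 1 := by
    rw [hVf]
    calc ∫ yy, (f yy) ^ 2 ∂μ ≤ ∫ _yy : Y × Y, (1:ℝ) ∂μ := by
          apply integral_mono hf2i (integrable_const _)
          intro yy
          have h1 := (hp01 yy).1; have h2 := (hp01 yy).2
          have : |f yy| ≤ 1 := by rw [hf]; simp only; rw [abs_le]; constructor <;> linarith
          calc (f yy)^2 = |f yy|^2 := (sq_abs _).symm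
            _ ≤ 1^2 := by apply pow_le_pow_left₀ (abs_nonneg _) this
            _ = 1 := one_pow 2
      _ = 1 := by simp [measure_univ]
  -- Cauchy-Schwarz: ∫ |f| ≤ (Var μ p)^(1/2)
  have hfb : ∀ yy, ‖f yy‖ ≤ 1 := by
    intro yy
    have h1 := (hp01 yy).1; have h2 := (hp01 yy).2
    rw [hf, Real.norm_eq_abs]; simp only; rw [abs_le]; constructor <;> linarith
  have hfm : Measurable f := hp.sub measurable_const
  have hfmem : MemLp f (ENNReal.ofReal 2) μ :=
    MemLp.of_bound hfm.aestronglyMeasurable 1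
      (Filter.Eventually.of_forall hfb)
  have hconj : (2:ℝ).HolderConjugate 2 := by constructor <;> norm_num
  have hCS : ∫ yy, |f yy| ∂μ ≤ (Var μ p) ^ ((1:ℝ)/2) := by
    have key := integral_mul_norm_le_Lp_mul_Lq (μ := μ) hconj hfmem
      (memLp_const (1 : ℝ))
    simp only [norm_one, mul_one, Real.one_rpow, integral_const, measure_univ,
      probReal_univ, smul_eq_mul, one_mul] at key
    have hs : ∀ yy, ‖f yy‖ ^ (2:ℝ) = (f yy) ^ 2 := by
      intro yy
      rw [show (2:ℝ) = ((2:ℕ):ℝ) by norm_num, Real.rpow_natCast, Real.norm_eq_abs, sq_abs]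
    simp only [hs] at key
    rw [hVf]
    calc ∫ yy, |f yy| ∂μ = ∫ yy, ‖f yy‖ ∂μ := by simp [Real.norm_eq_abs]
      _ ≤ (∫ yy, (f yy) ^ 2 ∂μ) ^ ((1:ℝ)/2) := key
  -- split the integral
  have hsm2 : AEStronglyMeasurable (fun yy => ((1:ℝ)/2 - p yy) • h yy) μ :=
    (((measurable_const.sub hp).stronglyMeasurable).smul hhm).aestronglyMeasurable
  have hb2 : ∀ yy, ‖((1:ℝ)/2 - p yy) • h yy‖ ≤ 2 * G * |f yy| := by
    intro yy
    rw [norm_smul, Real.norm_eq_abs]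
    have : |(1:ℝ)/2 - p yy| = |f yy| := by rw [hf]; simp only; rw [abs_sub_comm]
    rw [this, mul_comm]
    apply mul_le_mul_of_nonneg_right (hhb yy) (abs_nonneg _)
  have hi2 : Integrable (fun yy => ((1:ℝ)/2 - p yy) • h yy) μ :=
    (integrable_const (2 * G * 1)).mono' hsm2
      (Filter.Eventually.of_forall fun yy =>
        (hb2 yy).trans (by
          have := hfb yy
          rw [Real.norm_eq_abs] at this
          nlinarith [abs_nonneg (f yy)]))
  have hi1 : Integrable (fun yy => ((1:ℝ)/2) • h yy) μ := hhi.smul ((1:ℝ)/2)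
  have hsplit : ∫ yy, (1 - p yy) • h yy ∂μ = ∫ yy, ((1:ℝ)/2 - p yy) • h yy ∂μ := by
    have : ∫ yy, (1 - p yy) • h yy ∂μ =
        ∫ yy, (((1:ℝ)/2) • h yy + ((1:ℝ)/2 - p yy) • h yy) ∂μ := by
      refine integral_congr_ae (Filter.Eventually.of_forall fun yy => ?_)
      simp only [← add_smul]
      congr 1
      ring
    rw [this, integral_add hi1 hi2, integral_smul, hint, smul_zero, zero_add]
  have habsi : Integrable (fun yy => 2 * G * |f yy|) μ :=
    (((integrable_const (1:ℝ)).mono' hfm.aestronglyMeasurable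
      (Filter.Eventually.of_forall hfb)).abs).const_mul (2 * G)
  -- main chain
  calc ‖∫ yy, (1 - p yy) • h yy ∂μ‖
      = ‖∫ yy, ((1:ℝ)/2 - p yy) • h yy ∂μ‖ := by rw [hsplit]
    _ ≤ ∫ yy, ‖((1:ℝ)/2 - p yy) • h yy‖ ∂μ := norm_integral_le_integral_norm _
    _ ≤ ∫ yy, 2 * G * |f yy| ∂μ := integral_mono hi2.norm habsi hb2
    _ = 2 * G * ∫ yy, |f yy| ∂μ := integral_const_mul _ _
    _ ≤ 2 * G * (Var μ p) ^ ((1:ℝ)/2) := by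
        apply mul_le_mul_of_nonneg_left hCS (by linarith)
    _ ≤ 2 * G * (Var μ p) ^ ((1:ℝ)/3) := by
        apply mul_le_mul_of_nonneg_left _ (by linarith)
        rcases eq_or_lt_of_le hV0 with hz | hpos
        · rw [← hz, Real.zero_rpow (by norm_num), Real.zero_rpow (by norm_num)]
        · exact Real.rpow_le_rpow_of_exponent_ge hpos hV1 (by norm_num)
    _ ≤ 3 * G * (Var μ p) ^ ((1:ℝ)/3) := by
        apply mul_le_mul_of_nonneg_right _ (Real.rpow_nonneg hV0 _)
        linarith
end
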